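/- For every n ≥ 4, the square-free potential of Zimin words satisfies the recursion AE(Z_n) = 2^n − 2n + 2·AE(Z_{n−1}), where AE(Z_n) is the number of pairs (insertion position, letter from {1,...,n}) whose insertion into Z_n yields a square-free word. -/

import Mathlib

def HasSquare (W : List ℕ) : Prop := ∃ X : List ℕ, X ≠ [] ∧ X ++ X <:+: W

def SquareFree (W : List ℕ) : Prop := ¬ HasSquare W


def Zimin : ℕ → List ℕ
  | 0 => []
  | n + 1 => Zimin n ++ (n + 1) :: Zimin n


def insertAt (W : List ℕ) (p x : ℕ) : List ℕ := W.take p ++ x :: W.drop p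


noncomputable def AE (n : ℕ) (W : List ℕ) : ℕ :=
  {q : ℕ × ℕ | q.1 ≤ W.length ∧ 1 ≤ q.2 ∧ q.2 ≤ n ∧ SquareFree (insertAt W q.1 q.2)}.ncard

noncomputable def ae (n : ℕ) (W : List ℕ) : ℕ :=
  {q : ℕ × ℕ | 1 ≤ q.1 ∧ q.1 < W.length ∧ 1 ≤ q.2 ∧ q.2 ≤ n ∧
    SquareFree (insertAt W q.1 q.2)}.ncard


def nu (x : ℕ) : ℕ := padicValNat 2 x

lemma nu_spec {x : ℕ} (hx : x ≠ 0) : 2 ^ nu x ∣ x ∧ ¬ 2 ^ (nu x + 1) ∣ x :=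
  ⟨pow_padicValNat_dvd, pow_succ_padicValNat_not_dvd hx⟩

lemma nu_unique {x t : ℕ} (h1 : 2 ^ t ∣ x) (h2 : ¬ 2 ^ (t + 1) ∣ x) : nu x = t := by
  have hx : x ≠ 0 := by rintro rfl; exact h2 (dvd_zero _)
  obtain ⟨d1, d2⟩ := nu_spec hx
  rcases lt_trichotomy (nu x) t with h | h | h
  · exact absurd ((pow_dvd_pow 2 h).trans h1) d2
  · exact h
  · exact absurd ((pow_dvd_pow 2 h).trans d1) h2

lemma nu_two_pow (t : ℕ) : nu (2 ^ t) = t :=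
  nu_unique dvd_rfl (fun h => by
    have := Nat.le_of_dvd (by positivity) h
    have h2 : (2:ℕ) ^ t < 2 ^ (t+1) := Nat.pow_lt_pow_right one_lt_two (by omega)
    omega)

lemma nu_one : nu 1 = 0 := nu_two_pow 0

lemma nu_lt_of_lt_pow {x c : ℕ} (hx : x ≠ 0) (h : x < 2 ^ c) : nu x < c := by
  by_contra hc
  push_neg at hc
  have := (pow_dvd_pow 2 hc).trans (nu_spec hx).1
  exact absurd (Nat.le_of_dvd (Nat.pos_of_ne_zero hx) this) (by omega)

lemma nu_add_right {x y c : ℕ} (hx : x ≠ 0) (hc : nu x < c) (hy : 2 ^ c ∣ y) :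
    nu (x + y) = nu x := by
  obtain ⟨d1, d2⟩ := nu_spec hx
  refine nu_unique (dvd_add d1 ((pow_dvd_pow 2 (by omega)).trans hy)) ?_
  intro h
  have : 2 ^ (nu x + 1) ∣ y := (pow_dvd_pow 2 (by omega)).trans hy
  have := Nat.dvd_sub h this
  rw [Nat.add_sub_cancel] at this
  exact d2 this

lemma nu_sub {x y c : ℕ} (hx : x ≠ 0) (hxy : x ≤ y) (hc : nu x < c) (hy : 2 ^ c ∣ y) :
    nu (y - x) = nu x := by
  obtain ⟨d1, d2⟩ := nu_spec hx
  refine nu_unique (Nat.dvd_sub ((pow_dvd_pow 2 (by omega)).trans hy) d1) ?_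
  intro h
  have hyd : 2 ^ (nu x + 1) ∣ y := (pow_dvd_pow 2 (by omega)).trans hy
  have : 2 ^ (nu x + 1) ∣ x := by
    have := Nat.dvd_sub hyd h
    rwa [Nat.sub_sub_self hxy] at this
  exact d2 this

lemma nu_eq_imp {u q : ℕ} (hu : u ≠ 0) (hq : q ≠ 0) (h : nu u = nu (u + q)) :
    2 ^ (nu u + 1) ∣ q := by
  obtain ⟨d1, d2⟩ := nu_spec hu
  obtain ⟨d3, d4⟩ := nu_spec (show u + q ≠ 0 by omega)
  rw [← h] at d3 d4
  set t := nu u with ht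
  obtain ⟨a, ha⟩ := d1
  obtain ⟨b, hb⟩ := d3
  have hao : a % 2 ≠ 0 := by
    intro h2
    obtain ⟨a', ha'⟩ : 2 ∣ a := Nat.dvd_of_mod_eq_zero h2
    exact d2 ⟨a', by rw [ha, ha', pow_succ]; ring⟩
  have hbo : b % 2 ≠ 0 := by
    intro h2
    obtain ⟨b', hb'⟩ : 2 ∣ b := Nat.dvd_of_mod_eq_zero h2
    exact d4 ⟨b', by rw [hb, hb', pow_succ]; ring⟩
  have hP : 0 < 2 ^ t := Nat.pow_pos (by norm_num)
  have hab : a ≤ b := by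
    rcases Nat.le_total a b with h' | h'
    · exact h'
    · have := Nat.mul_le_mul_left (2 ^ t) h'
      omega
  obtain ⟨k, hk⟩ : ∃ k, b = a + 2 * k := ⟨(b - a) / 2, by omega⟩
  refine ⟨k, ?_⟩
  have h1 : 2 ^ t * b = 2 ^ t * a + 2 ^ (t + 1) * k := by rw [hk, pow_succ]; ring
  omega

lemma exists_dvd_in_window {a q c : ℕ} (ha : 1 ≤ a) (hq : 2 ^ c ≤ q) :
    ∃ u, a ≤ u ∧ u < a + q ∧ u ≠ 0 ∧ 2 ^ c ∣ u := by
  set P := 2 ^ c with hP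
  have hP0 : 0 < P := Nat.pow_pos (by norm_num)
  have h1 := Nat.div_add_mod (a + P - 1) P
  have h2 := Nat.mod_lt (a + P - 1) hP0
  exact ⟨P * ((a + P - 1) / P), by omega, by omega, by omega, dvd_mul_right _ _⟩

lemma ruler_no_square {a q : ℕ} (ha : 1 ≤ a) (hq : 0 < q)
    (h : ∀ i < q, nu (a + i) = nu (a + q + i)) : False := by
  obtain ⟨u, hu1, hu2⟩ := Finset.exists_max_image (Finset.Ico a (a + q)) nu ⟨a, by simp [hq]⟩
  rw [Finset.mem_Ico] at hu1
  have hu0 : u ≠ 0 := by omega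
  have hdvd : 2 ^ (nu u + 1) ∣ q := by
    apply nu_eq_imp hu0 (by omega)
    have h3 := h (u - a) (by omega)
    have e1 : a + (u - a) = u := by omega
    have e2 : a + q + (u - a) = u + q := by omega
    rw [e1, e2] at h3
    exact h3
  have hle : 2 ^ (nu u + 1) ≤ q := Nat.le_of_dvd hq hdvd
  obtain ⟨w, hw1, hw2, hw0, hwd⟩ := exists_dvd_in_window (c := nu u + 1) ha hle
  have hmax : nu w ≤ nu u := hu2 w (Finset.mem_Ico.mpr ⟨hw1, hw2⟩)
  exact (nu_spec hw0).2 ((pow_dvd_pow 2 (by omega)).trans hwd)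

lemma nu_sub2 {x y c : ℕ} (hx : x ≠ 0) (hyx : y ≤ x) (hc : nu x < c) (hy : 2 ^ c ∣ y) :
    nu (x - y) = nu x := by
  obtain ⟨d1, d2⟩ := nu_spec hx
  refine nu_unique (Nat.dvd_sub d1 ((pow_dvd_pow 2 (by omega)).trans hy)) ?_
  intro h
  have hyd : 2 ^ (nu x + 1) ∣ y := (pow_dvd_pow 2 (by omega)).trans hy
  have : 2 ^ (nu x + 1) ∣ x := by
    have := dvd_add h hyd
    rwa [Nat.sub_add_cancel hyx] at this
  exact d2 this

lemma pow_le_of_le_pow {a b : ℕ} (h : 2 ^ a ≤ 2 ^ b) : a ≤ b :=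
  (Nat.pow_le_pow_iff_right (by norm_num)).mp h

lemma border_forced {p L k : ℕ} (hk : 1 ≤ k) (hm : p + L = 2 ^ k - 1) (hL : 1 ≤ L)
    (h : ∀ i, 1 ≤ i → i ≤ L → nu (p + i) = nu i) : ∃ t, L + 1 = 2 ^ t := by
  have h2k1 : 1 ≤ 2 ^ k := Nat.one_le_two_pow
  rcases Nat.eq_zero_or_pos p with hp | hp
  · exact ⟨k, by omega⟩
  set t := Nat.log 2 L with htdef
  have h2t : 2 ^ t ≤ L := Nat.pow_log_le_self 2 (by omega)
  have h2t' : L < 2 ^ (t + 1) := Nat.lt_pow_succ_log_self (by norm_num) L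
  have hnp : nu (p + 2 ^ t) = t := by
    rw [h _ (Nat.one_le_two_pow) h2t, nu_two_pow]
  have hdvd : 2 ^ (t + 1) ∣ p := by
    rcases lt_trichotomy (nu p) t with hc | hc | hc
    · have := nu_add_right (x := p) (y := 2 ^ t) (c := t) (by omega) hc dvd_rfl
      omega
    · obtain ⟨d1, d2⟩ := nu_spec (show p ≠ 0 by omega)
      rw [hc] at d1 d2
      obtain ⟨a, ha⟩ := d1
      have hao : a % 2 = 1 := by
        rcases Nat.mod_two_eq_zero_or_one a with h2 | h2
        · obtain ⟨a', ha'⟩ : 2 ∣ a := Nat.dvd_of_mod_eq_zero h2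
          exact absurd ⟨a', by rw [ha, ha', pow_succ]; ring⟩ d2
        · exact h2
      have hdd : 2 ^ (t + 1) ∣ p + 2 ^ t := by
        refine ⟨(a + 1) / 2, ?_⟩
        have : a + 1 = 2 * ((a + 1) / 2) := by omega
        rw [ha, pow_succ]
        calc 2 ^ t * a + 2 ^ t = 2 ^ t * (a + 1) := by ring
        _ = 2 ^ t * (2 * ((a + 1) / 2)) := by rw [← this]
        _ = 2 ^ t * 2 * ((a + 1) / 2) := by ring
      have := nu_spec (show p + 2 ^ t ≠ 0 by omega)
      rw [hnp] at this
      exact absurd hdd this.2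
    · exact (pow_dvd_pow 2 (by omega)).trans (nu_spec (by omega)).1
  have hpk : 2 ^ (t + 1) ≤ p := Nat.le_of_dvd hp hdvd
  have htk : t + 1 ≤ k := pow_le_of_le_pow (by omega)
  have hdL : 2 ^ (t + 1) ∣ L + 1 := by
    have h1 : 2 ^ (t + 1) ∣ 2 ^ k := pow_dvd_pow 2 htk
    have h2 := Nat.dvd_sub h1 hdvd
    have he : 2 ^ k - p = L + 1 := by omega
    rwa [he] at h2
  have : 2 ^ (t + 1) ≤ L + 1 := Nat.le_of_dvd (by omega) hdL
  exact ⟨t + 1, by omega⟩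

lemma rev_border_kill {p L k : ℕ} (hk : 1 ≤ k) (hm : p + L = 2 ^ k - 1) (hL : 1 ≤ L)
    (hLp : L ≤ p) (h : ∀ i, 1 ≤ i → i ≤ L → nu (p + 1 - i) = nu i) : False := by
  have h2k1 : 1 ≤ 2 ^ k := Nat.one_le_two_pow
  set t := Nat.log 2 L with htdef
  have h2t : 2 ^ t ≤ L := Nat.pow_log_le_self 2 (by omega)
  have h2t' : L < 2 ^ (t + 1) := Nat.lt_pow_succ_log_self (by norm_num) L
  have hnp : nu (p + 1 - 2 ^ t) = t := by
    rw [h _ (Nat.one_le_two_pow) h2t, nu_two_pow]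
  have hdvd : 2 ^ (t + 1) ∣ p + 1 := by
    rcases lt_trichotomy (nu (p + 1)) t with hc | hc | hc
    · have := nu_sub2 (x := p + 1) (y := 2 ^ t) (c := t) (by omega) (by omega) hc dvd_rfl
      omega
    · obtain ⟨d1, d2⟩ := nu_spec (show p + 1 ≠ 0 by omega)
      rw [hc] at d1 d2
      obtain ⟨a, ha⟩ := d1
      have hao : a % 2 = 1 := by
        rcases Nat.mod_two_eq_zero_or_one a with h2 | h2
        · obtain ⟨a', ha'⟩ : 2 ∣ a := Nat.dvd_of_mod_eq_zero h2
          exact absurd ⟨a', by rw [ha, ha', pow_succ]; ring⟩ d2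
        · exact h2
      have ha1 : 1 ≤ a := by
        rcases Nat.eq_zero_or_pos a with h0 | h0
        · rw [h0] at ha; omega
        · exact h0
      obtain ⟨b, rfl⟩ : ∃ b, a = b + 1 := ⟨a - 1, by omega⟩
      have hdd : 2 ^ (t + 1) ∣ p + 1 - 2 ^ t := by
        refine ⟨b / 2, ?_⟩
        have h5 : b = 2 * (b / 2) := by omega
        have h6 : p + 1 - 2 ^ t = 2 ^ t * b := by
          have : 2 ^ t * (b + 1) = 2 ^ t * b + 2 ^ t := by ring
          omega
        rw [h6, pow_succ]
        calc 2 ^ t * b = 2 ^ t * (2 * (b / 2)) := by rw [← h5]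
        _ = 2 ^ t * 2 * (b / 2) := by ring
      have hne : p + 1 - 2 ^ t ≠ 0 := by omega
      have := nu_spec hne
      rw [hnp] at this
      exact absurd hdd this.2
    · exact (pow_dvd_pow 2 (by omega)).trans (nu_spec (by omega)).1
  have hpk : 2 ^ (t + 1) ≤ p + 1 := Nat.le_of_dvd (by omega) hdvd
  have hplt : p + 1 < 2 ^ k := by omega
  have htk : t + 1 ≤ k := pow_le_of_le_pow (by omega)
  have hdL : 2 ^ (t + 1) ∣ L := by
    have h1 : 2 ^ (t + 1) ∣ 2 ^ k := pow_dvd_pow 2 htk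
    have h2 := Nat.dvd_sub h1 hdvd
    have he : 2 ^ k - (p + 1) = L := by omega
    rwa [he] at h2
  have : 2 ^ (t + 1) ≤ L := Nat.le_of_dvd (by omega) hdL
  omega

lemma border_holds {k t i : ℕ} (htk : t ≤ k) (hi : 1 ≤ i) (hiL : i ≤ 2 ^ t - 1) :
    nu (2 ^ k - 2 ^ t + i) = nu i := by
  have h1 : 2 ^ t ≤ 2 ^ k := Nat.pow_le_pow_right (by norm_num) htk
  rcases Nat.eq_zero_or_pos (2 ^ k - 2 ^ t) with h0 | h0
  · rw [h0, zero_add]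
  · rw [Nat.add_comm]
    refine nu_add_right (x := i) (y := 2 ^ k - 2 ^ t) (c := t) (by omega) ?_ ?_
    · exact nu_lt_of_lt_pow (by omega) (by have : 1 ≤ 2 ^ t := Nat.one_le_two_pow; omega)
    · exact Nat.dvd_sub (pow_dvd_pow 2 htk) dvd_rfl

/-! ### Zimin words via the ruler function -/

def rulf (j : ℕ) : ℕ := nu (j + 1) + 1

lemma zimin_map (k : ℕ) : Zimin k = (List.range (2 ^ k - 1)).map rulf := by
  induction k with
  | zero => simp [Zimin]
  | succ k ih =>
    have h1 : 1 ≤ 2 ^ k := Nat.one_le_two_pow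
    set N := 2 ^ k - 1 with hN
    have hp : N + 1 = 2 ^ k := by omega
    have hsplit : 2 ^ (k + 1) - 1 = (N + 1) + N := by
      have : 2 ^ (k + 1) = 2 ^ k + 2 ^ k := by rw [pow_succ]; ring
      omega
    show Zimin k ++ (k + 1) :: Zimin k = _
    rw [hsplit, List.range_add, List.map_append, List.range_succ, List.map_append,
      List.map_map, ih]
    have hmid : rulf N = k + 1 := by
      unfold rulf
      rw [hp, nu_two_pow]
    have hshift : List.map (rulf ∘ fun x => N + 1 + x) (List.range N) =
        List.map rulf (List.range N) := by
      apply List.map_congr_left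
      intro x hx
      rw [List.mem_range] at hx
      show rulf (N + 1 + x) = rulf x
      unfold rulf
      congr 1
      rw [show N + 1 + x + 1 = (x + 1) + 2 ^ k from by omega]
      exact nu_add_right (by omega) (nu_lt_of_lt_pow (by omega) (by omega)) dvd_rfl
    rw [hshift]
    simp [hmid]

lemma zimin_length (k : ℕ) : (Zimin k).length = 2 ^ k - 1 := by
  rw [zimin_map]; simp

lemma getD_map_range (g : ℕ → ℕ) {N j : ℕ} (h : j < N) :
    ((List.range N).map g).getD j 0 = g j := by
  rw [List.getD_eq_getElem _ _ (by simpa using h), List.getElem_map, List.getElem_range]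

lemma zimin_getD {k j : ℕ} (h : j < 2 ^ k - 1) : (Zimin k).getD j 0 = rulf j := by
  rw [zimin_map]; exact getD_map_range _ h

lemma zimin_mem {k x : ℕ} (h : x ∈ Zimin k) : 1 ≤ x ∧ x ≤ k := by
  induction k with
  | zero => simp [Zimin] at h
  | succ k ih =>
    simp only [Zimin, List.mem_append, List.mem_cons] at h
    rcases h with h | h | h
    · have := ih h; omega
    · omega
    · have := ih h; omega

lemma zimin_reverse (k : ℕ) : (Zimin k).reverse = Zimin k := by
  induction k with
  | zero => simp [Zimin]
  | succ k ih => simp [Zimin, List.reverse_append, ih]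

/-! ### Squares via indices -/

lemma getD_append_left (l l' : List ℕ) {n : ℕ} (h : n < l.length) :
    (l ++ l').getD n 0 = l.getD n 0 := List.getD_append _ _ _ _ h

lemma getD_append_right (l l' : List ℕ) {n : ℕ} (h : l.length ≤ n) :
    (l ++ l').getD n 0 = l'.getD (n - l.length) 0 := by
  rw [List.getD_eq_getElem?_getD, List.getD_eq_getElem?_getD, List.getElem?_append_right h]

lemma hasSquare_iff {W : List ℕ} :
    HasSquare W ↔ ∃ s q, 0 < q ∧ s + q + q ≤ W.length ∧
      ∀ i < q, W.getD (s + i) 0 = W.getD (s + q + i) 0 := by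
  constructor
  · rintro ⟨X, hX, u, v, huv⟩
    have hlen : W.length = u.length + (X.length + X.length) + v.length := by
      rw [← huv]; simp; omega
    refine ⟨u.length, X.length, List.length_pos_iff.mpr hX, by omega, ?_⟩
    intro i hi
    have e1 : W.getD (u.length + i) 0 = X.getD i 0 := by
      rw [← huv, getD_append_left _ _ (by simp; omega),
        getD_append_right _ _ (by simp), Nat.add_sub_cancel_left,
        getD_append_left _ _ (by omega)]
    have e2 : W.getD (u.length + X.length + i) 0 = X.getD i 0 := by
      rw [← huv, getD_append_left _ _ (by simp; omega),
        show u.length + X.length + i = u.length + (X.length + i) from by omega,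
        getD_append_right _ _ (by simp), Nat.add_sub_cancel_left,
        getD_append_right _ _ (by omega), Nat.add_sub_cancel_left]
    rw [e1, e2]
  · rintro ⟨s, q, hq, hlen, heq⟩
    have hXlen : ((W.drop s).take q).length = q := by simp; omega
    refine ⟨(W.drop s).take q, fun hnil => by simp [hnil] at hXlen; omega, ?_⟩
    have hsecond : ((W.drop s).drop q).take q = (W.drop s).take q := by
      apply List.ext_getElem
      · simp; omega
      · intro i h1 h2
        have hiq : i < q := by simp at h2; omega
        rw [List.getElem_take, List.getElem_take, List.getElem_drop, List.getElem_drop,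
          List.getElem_drop]
        have h3 := heq i hiq
        rw [← List.getD_eq_getElem, ← List.getD_eq_getElem,
          show s + (q + i) = s + q + i from by omega]
        exact h3.symm
    have hkey : (W.drop s).take (q + q) = (W.drop s).take q ++ (W.drop s).take q := by
      rw [List.take_add, hsecond]
    have : (W.drop s).take q ++ (W.drop s).take q <:+: W := by
      rw [← hkey]
      exact ((List.take_prefix _ _).isInfix).trans ((List.drop_suffix s W).isInfix)
    exact this

lemma hasSquare_reverse {W : List ℕ} (h : HasSquare W) : HasSquare W.reverse := by
  obtain ⟨X, hX, hinf⟩ := h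
  refine ⟨X.reverse, by simpa using hX, ?_⟩
  have := List.reverse_infix.mpr hinf
  rwa [List.reverse_append] at this

lemma hasSquare_infix {U V : List ℕ} (h : U <:+: V) (hU : HasSquare U) : HasSquare V := by
  obtain ⟨X, hX, hinf⟩ := hU
  exact ⟨X, hX, hinf.trans h⟩

lemma zimin_squareFree (k : ℕ) : SquareFree (Zimin k) := by
  intro h
  rw [hasSquare_iff] at h
  obtain ⟨s, q, hq, hlen, heq⟩ := h
  rw [zimin_length] at hlen
  refine ruler_no_square (a := s + 1) (by omega) hq ?_
  intro i hi
  have := heq i hi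
  rw [zimin_getD (by omega), zimin_getD (by omega)] at this
  unfold rulf at this
  rw [show s + 1 + i = s + i + 1 from by omega, show s + 1 + q + i = s + q + i + 1 from by omega]
  omega

/-! ### Insert position decomposition -/

lemma insertAt_left {A B : List ℕ} {p x : ℕ} (hp : p ≤ A.length) :
    insertAt (A ++ B) p x = insertAt A p x ++ B := by
  unfold insertAt
  rw [List.take_append, List.drop_append,
    show p - A.length = 0 from by omega]
  simp

lemma insertAt_right {A B : List ℕ} {p x : ℕ} (hp : A.length ≤ p) :
    insertAt (A ++ B) p x = A ++ insertAt B (p - A.length) x := by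
  unfold insertAt
  rw [List.take_append, List.drop_append,
    List.take_of_length_le hp, List.drop_eq_nil_of_le hp]
  simp

lemma insertAt_cons {a : ℕ} {A : List ℕ} {r x : ℕ} (hr : 1 ≤ r) :
    insertAt (a :: A) r x = a :: insertAt A (r - 1) x := by
  obtain ⟨r', rfl⟩ : ∃ r', r = r' + 1 := ⟨r - 1, by omega⟩
  unfold insertAt
  rw [List.take_succ_cons, List.drop_succ_cons]
  simp

lemma insertAt_length {A : List ℕ} {p x : ℕ} (hp : p ≤ A.length) :
    (insertAt A p x).length = A.length + 1 := by
  unfold insertAt; simp; omega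

lemma hasSquare_append_singleton {U V : List ℕ} {n : ℕ} (hU : n ∉ U) (hV : n ∉ V) :
    HasSquare (U ++ n :: V) ↔ HasSquare U ∨ HasSquare V := by
  constructor
  · rintro ⟨X, hX, u, v, huv⟩
    have hcnt : List.count n (U ++ n :: V) = 1 := by
      rw [List.count_append, List.count_cons_self, List.count_eq_zero.mpr hU,
        List.count_eq_zero.mpr hV]
    have hinf : X ++ X <:+: U ++ n :: V := ⟨u, v, huv⟩
    have h2 : List.count n (X ++ X) ≤ 1 := by
      have := hinf.count_le n
      omega
    have hX0 : n ∉ X := by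
      intro hmem
      have := List.count_pos_iff.mpr hmem
      rw [List.count_append] at h2
      omega
    have hlenuv := congrArg List.length huv
    simp only [List.length_append, List.length_cons] at hlenuv
    rcases le_or_gt (u.length + (X.length + X.length)) U.length with hcase | hcase
    · left
      have hU' : (u ++ (X ++ X) ++ v).take U.length = U := by
        rw [huv, List.take_left' rfl]
      have e1 : (u ++ (X ++ X)).length ≤ U.length := by
        simp only [List.length_append]; omega
      have hpre0 : u ++ (X ++ X) ++ v.take (U.length - (u ++ (X ++ X)).length) = U := by
        conv_rhs => rw [← hU']
        rw [List.take_append, List.take_of_length_le e1]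
      have hpre : (u ++ (X ++ X)) <+: U := ⟨_, hpre0⟩
      exact ⟨X, hX, (List.suffix_append u (X ++ X)).isInfix.trans hpre.isInfix⟩
    · right
      have hub : U.length + 1 ≤ u.length := by
        by_contra hle
        push_neg at hle
        apply hX0
        have hget : (u ++ (X ++ X) ++ v).getD U.length 0 = n := by
          rw [huv, getD_append_right _ _ (by omega), Nat.sub_self]
          rfl
        rw [getD_append_left _ _ (by simp only [List.length_append]; omega),
          getD_append_right _ _ (by omega)] at hget
        have hlt : U.length - u.length < X.length + X.length := by omega
        rw [List.getD_eq_getElem _ _ (by simpa using hlt)] at hget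
        rcases lt_or_ge (U.length - u.length) X.length with h3 | h3
        · rw [List.getElem_append_left h3] at hget
          rw [← hget]; exact List.getElem_mem _
        · rw [List.getElem_append_right h3] at hget
          rw [← hget]; exact List.getElem_mem _
      have hV' : (u ++ (X ++ X) ++ v).drop (U.length + 1) = V := by
        rw [huv]
        have h4 : U.length + 1 = (U ++ [n]).length := by simp
        rw [show U ++ n :: V = (U ++ [n]) ++ V from by simp, h4, List.drop_left' rfl]
      rw [List.drop_append, List.drop_append,
        show U.length + 1 - u.length = 0 from by omega,
        show U.length + 1 - (u ++ (X ++ X)).length = 0 from by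
          simp only [List.length_append]; omega,
        List.drop_zero, List.drop_zero] at hV'
      exact ⟨X, hX, u.drop (U.length + 1), v, hV'⟩
  · rintro (h | h)
    · exact hasSquare_infix ((List.prefix_append U (n :: V)).isInfix) h
    · exact hasSquare_infix (((List.suffix_append [n] V).trans
        (List.suffix_append U (n :: V))).isInfix) (by simpa using h)

/-! ### The getD description of insertions -/

lemma insert_getD {W : List ℕ} {p x u : ℕ} (hp : p ≤ W.length) :
    (insertAt W p x).getD u 0 =
      if u < p then W.getD u 0 else if u = p then x else W.getD (u - 1) 0 := by
  unfold insertAt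
  have hlt : (W.take p).length = p := by simp; omega
  split_ifs with h1 h2
  · rw [getD_append_left _ _ (by omega), List.getD_eq_getElem?_getD, List.getD_eq_getElem?_getD,
      List.getElem?_take]
    simp [h1]
  · subst h2
    rw [getD_append_right _ _ (by omega), hlt, Nat.sub_self, List.getD_cons_zero]
  · rw [getD_append_right _ _ (by omega), hlt,
      show u - p = (u - p - 1) + 1 from by omega, List.getD_cons_succ,
      List.getD_eq_getElem?_getD, List.getD_eq_getElem?_getD, List.getElem?_drop,
      show p + (u - p - 1) = u - 1 from by omega]

lemma rulf_le {k j : ℕ} (hj : j < 2 ^ (k + 1) - 1) : rulf j ≤ k + 1 := by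
  unfold rulf
  have h1 : 1 ≤ 2 ^ (k + 1) := Nat.one_le_two_pow
  by_contra h
  push_neg at h
  have : 2 ^ (k + 1) ∣ j + 1 := (pow_dvd_pow 2 (by omega)).trans (nu_spec (by omega)).1
  have := Nat.le_of_dvd (by omega) this
  omega

lemma rulf_eq_top_iff {k j : ℕ} (hj : j < 2 ^ (k + 1) - 1) :
    rulf j = k + 1 ↔ j = 2 ^ k - 1 := by
  have h1 : 1 ≤ 2 ^ k := Nat.one_le_two_pow
  have h2 : 2 ^ (k + 1) = 2 ^ k + 2 ^ k := by rw [pow_succ]; ring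
  constructor
  · intro h
    unfold rulf at h
    have hk : nu (j + 1) = k := by omega
    have hd : 2 ^ k ∣ j + 1 := hk ▸ (nu_spec (by omega)).1
    have := Nat.le_of_dvd (by omega) hd
    obtain ⟨c, hc⟩ := hd
    have hcb : 2 ^ k * c < 2 ^ k * 2 := by omega
    have : c < 2 := Nat.lt_of_mul_lt_mul_left hcb
    interval_cases c
    · omega
    · omega
  · rintro rfl
    unfold rulf
    rw [show 2 ^ k - 1 + 1 = 2 ^ k from by omega, nu_two_pow]

lemma nu_eq_zero_iff {x : ℕ} (hx : x ≠ 0) : nu x = 0 ↔ ¬ 2 ∣ x := by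
  constructor
  · intro h
    have := (nu_spec hx).2
    rw [h, pow_one] at this
    exact this
  · intro h
    exact nu_unique (by simpa using one_dvd x) (by simpa [pow_one] using h)

lemma nu_pred_pow {k : ℕ} (hk : 1 ≤ k) : nu (2 ^ k - 1) = 0 := by
  have h1 : 2 ≤ 2 ^ k := by
    calc 2 = 2 ^ 1 := (pow_one 2).symm
    _ ≤ 2 ^ k := Nat.pow_le_pow_right (by norm_num) hk
  have h2 : 2 ∣ 2 ^ k := dvd_pow_self 2 (by omega)
  rw [nu_eq_zero_iff (by omega)]
  intro h3
  obtain ⟨c, hc⟩ := h2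
  obtain ⟨d, hd⟩ := h3
  omega

/-! ### Inserting the top letter into a Zimin word -/

lemma insert_top_iff {k p : ℕ} (hk : 1 ≤ k) (hp : p ≤ 2 ^ k - 1) :
    HasSquare (insertAt (Zimin (k + 1)) p (k + 1)) ↔
      ∃ t, (2 ^ k - 1 - p) + 1 = 2 ^ t := by
  have h1 : 1 ≤ 2 ^ k := Nat.one_le_two_pow
  have h2 : 2 ^ (k + 1) = 2 ^ k + 2 ^ k := by rw [pow_succ]; ring
  set m := 2 ^ k - 1 with hm
  have hWlen : (Zimin (k + 1)).length = 2 * m + 1 := by rw [zimin_length]; omega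
  have hW'len : (insertAt (Zimin (k + 1)) p (k + 1)).length = 2 * m + 2 := by
    rw [insertAt_length (by omega)]; omega
  have hG : ∀ u, u < 2 * m + 2 →
      (insertAt (Zimin (k + 1)) p (k + 1)).getD u 0 =
        if u < p then rulf u else if u = p then k + 1 else rulf (u - 1) := by
    intro u hu
    rw [insert_getD (by omega)]
    split_ifs with h3 h4
    · exact zimin_getD (by omega)
    · rfl
    · exact zimin_getD (by omega)
  have hGtop : ∀ u, u < 2 * m + 2 → u ≠ p →
      ((insertAt (Zimin (k + 1)) p (k + 1)).getD u 0 = k + 1 ↔ u = m + 1) := by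
    intro u hu hup
    rw [hG u hu]
    by_cases h3 : u < p
    · rw [if_pos h3, rulf_eq_top_iff (by omega)]
      omega
    · rw [if_neg h3, if_neg hup, rulf_eq_top_iff (by omega)]
      omega
  constructor
  · intro hsq
    rw [hasSquare_iff] at hsq
    obtain ⟨s, q, hq, hlen, heq⟩ := hsq
    rw [hW'len] at hlen
    by_cases hAcase : p < s
    · exfalso
      refine ruler_no_square (a := s) (by omega) hq ?_
      intro i hi
      have h5 := heq i hi
      rw [hG _ (by omega), hG _ (by omega), if_neg (by omega), if_neg (by omega),
        if_neg (by omega), if_neg (by omega)] at h5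
      unfold rulf at h5
      rw [show s + i - 1 + 1 = s + i from by omega,
        show s + q + i - 1 + 1 = s + q + i from by omega] at h5
      omega
    by_cases hBcase : s + q + q ≤ p
    · exfalso
      refine ruler_no_square (a := s + 1) (by omega) hq ?_
      intro i hi
      have h5 := heq i hi
      rw [hG _ (by omega), hG _ (by omega), if_pos (by omega), if_pos (by omega)] at h5
      unfold rulf at h5
      rw [show s + 1 + i = s + i + 1 from by omega,
        show s + 1 + q + i = s + q + i + 1 from by omega]
      omega
    push_neg at hAcase hBcase
    have hGp : (insertAt (Zimin (k + 1)) p (k + 1)).getD p 0 = k + 1 := by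
      rw [hG _ (by omega), if_neg (by omega), if_pos rfl]
    have hpfirst : p < s + q := by
      by_contra hpt
      push_neg at hpt
      have h5 := heq (p - s - q) (by omega)
      rw [show s + q + (p - s - q) = p from by omega, hGp] at h5
      have h6 := (hGtop (s + (p - s - q)) (by omega) (by omega)).mp h5
      omega
    have hqval : p + q = m + 1 := by
      have h5 := heq (p - s) (by omega)
      rw [show s + (p - s) = p from by omega, show s + q + (p - s) = p + q from by omega,
        hGp] at h5
      have h6 := (hGtop (p + q) (by omega) (by omega)).mp h5.symm
      omega
    set L := m - p with hL
    rcases Nat.eq_zero_or_pos L with hL0 | hL0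
    · exact ⟨0, by omega⟩
    set d := p - s with hd
    have hcond2 : ∀ w, p - d + 1 ≤ w → w ≤ p → nu w = nu (w + L) := by
      intro w hw1 hw2
      have h5 := heq (w - 1 - s) (by omega)
      rw [show s + (w - 1 - s) = w - 1 from by omega,
        show s + q + (w - 1 - s) = w - 1 + q from by omega] at h5
      rw [hG _ (by omega), hG _ (by omega), if_pos (by omega), if_neg (by omega),
        if_neg (by omega)] at h5
      unfold rulf at h5
      rw [show w - 1 + 1 = w from by omega,
        show w - 1 + q - 1 + 1 = w + L from by omega] at h5
      omega
    have hcond1 : ∀ j, 1 ≤ j → j ≤ L - d → nu (p + j) = nu j := by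
      intro j hj1 hj2
      have h5 := heq (p + j - s) (by omega)
      rw [show s + (p + j - s) = p + j from by omega,
        show s + q + (p + j - s) = p + j + q from by omega] at h5
      rw [hG _ (by omega), hG _ (by omega), if_neg (by omega), if_neg (by omega),
        if_neg (by omega), if_neg (by omega)] at h5
      unfold rulf at h5
      rw [show p + j - 1 + 1 = p + j from by omega,
        show p + j + q - 1 + 1 = j + 2 ^ k from by omega] at h5
      rw [nu_add_right (by omega) (nu_lt_of_lt_pow (by omega) (by omega)) dvd_rfl] at h5
      omega
    rcases Nat.eq_zero_or_pos d with hd0 | hd0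
    · refine border_forced hk (show p + L = 2 ^ k - 1 from by omega) hL0 ?_
      intro i hi1 hi2
      exact hcond1 i hi1 (by omega)
    · exfalso
      have hpodd : nu p = 0 := by
        have h5 := hcond2 p (by omega) (le_refl p)
        have hmodd : nu (p + L) = 0 := by
          rw [show p + L = 2 ^ k - 1 from by omega]
          exact nu_pred_pow hk
        omega
      have hp2 : ¬ 2 ∣ p := (nu_eq_zero_iff (by omega)).mp hpodd
      have hdL : d = L := by
        by_contra hne
        have h6 := hcond1 1 (by omega) (by omega)
        rw [nu_one] at h6
        have h7 := (nu_eq_zero_iff (by omega)).mp h6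
        omega
      refine rev_border_kill hk (show p + L = 2 ^ k - 1 from by omega) hL0 (by omega) ?_
      intro i hi1 hi2
      have h5 := hcond2 (p + 1 - i) (by omega) (by omega)
      rw [show p + 1 - i + L = 2 ^ k - i from by omega] at h5
      rw [nu_sub (by omega) (by omega) (nu_lt_of_lt_pow (by omega) (by omega)) dvd_rfl] at h5
      exact h5
  · rintro ⟨t, ht⟩
    have htk : t ≤ k := pow_le_of_le_pow (by omega)
    have hpval : p = 2 ^ k - 2 ^ t := by omega
    rw [hasSquare_iff]
    refine ⟨p, m + 1 - p, by omega, by omega, ?_⟩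
    intro i hi
    rw [hG _ (by omega), hG _ (by omega)]
    rcases Nat.eq_zero_or_pos i with rfl | hi0
    · rw [if_neg (by omega), if_pos (by omega), if_neg (by omega), if_neg (by omega)]
      unfold rulf
      rw [show p + (m + 1 - p) + 0 - 1 + 1 = 2 ^ k from by omega, nu_two_pow]
    · rw [if_neg (by omega), if_neg (by omega), if_neg (by omega), if_neg (by omega)]
      unfold rulf
      rw [show p + i - 1 + 1 = p + i from by omega,
        show p + (m + 1 - p) + i - 1 + 1 = i + 2 ^ k from by omega,
        nu_add_right (by omega) (nu_lt_of_lt_pow (by omega) (by omega)) dvd_rfl]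
      have := border_holds (k := k) (t := t) htk hi0 (by omega)
      rw [← hpval] at this
      rw [this]

/-! ### Symmetry and low letters -/

lemma insertAt_reverse {W : List ℕ} {p x : ℕ} (hp : p ≤ W.length) :
    (insertAt W p x).reverse = insertAt W.reverse (W.length - p) x := by
  unfold insertAt
  rw [List.reverse_append, List.reverse_cons, List.reverse_drop, List.reverse_take]
  simp [List.append_assoc]

lemma hasSquare_insert_symm {W : List ℕ} {p x : ℕ} (hW : W.reverse = W) (hp : p ≤ W.length) :
    HasSquare (insertAt W p x) ↔ HasSquare (insertAt W (W.length - p) x) := by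
  constructor
  · intro h
    have := hasSquare_reverse h
    rwa [insertAt_reverse hp, hW] at this
  · intro h
    have := hasSquare_reverse h
    rwa [insertAt_reverse (by omega), hW, show W.length - (W.length - p) = p from by omega]
      at this

lemma insertAt_mem {A : List ℕ} {p x y : ℕ} (h : y ∈ insertAt A p x) : y = x ∨ y ∈ A := by
  unfold insertAt at h
  rw [List.mem_append, List.mem_cons] at h
  rcases h with h | h | h
  · exact Or.inr ((List.take_sublist p A).subset h)
  · exact Or.inl h
  · exact Or.inr ((List.drop_sublist p A).subset h)

lemma not_top_mem_insert {k p x : ℕ} (hxk : x ≤ k) :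
    (k + 1) ∉ insertAt (Zimin k) p x := by
  intro h
  rcases insertAt_mem h with h | h
  · omega
  · have := zimin_mem h
    omega

lemma not_top_mem {k : ℕ} : (k + 1) ∉ Zimin k := by
  intro h
  have := zimin_mem h
  omega

lemma insert_low_iff_left {k p x : ℕ} (hxk : x ≤ k) (hp : p ≤ 2 ^ k - 1) :
    SquareFree (insertAt (Zimin (k + 1)) p x) ↔ SquareFree (insertAt (Zimin k) p x) := by
  have hA : (Zimin k).length = 2 ^ k - 1 := zimin_length k
  have hsplit : Zimin (k + 1) = Zimin k ++ (k + 1) :: Zimin k := rfl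
  rw [hsplit, insertAt_left (by omega)]
  unfold SquareFree
  rw [hasSquare_append_singleton (not_top_mem_insert hxk) not_top_mem]
  have := zimin_squareFree k
  unfold SquareFree at this
  tauto

lemma insert_low_iff_right {k p x : ℕ} (hxk : x ≤ k) (hp1 : 2 ^ k ≤ p) :
    SquareFree (insertAt (Zimin (k + 1)) p x) ↔
      SquareFree (insertAt (Zimin k) (p - 2 ^ k) x) := by
  have h1 : 1 ≤ 2 ^ k := Nat.one_le_two_pow
  have hA : (Zimin k).length = 2 ^ k - 1 := zimin_length k
  have hsplit : Zimin (k + 1) = Zimin k ++ (k + 1) :: Zimin k := rfl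
  rw [hsplit, insertAt_right (by omega), insertAt_cons (by omega),
    show p - (Zimin k).length - 1 = p - 2 ^ k from by omega]
  unfold SquareFree
  rw [hasSquare_append_singleton not_top_mem (not_top_mem_insert hxk)]
  have := zimin_squareFree k
  unfold SquareFree at this
  tauto

/-! ### Counting -/

open Classical in
lemma AE_eq_card (nn : ℕ) (W : List ℕ) :
    AE nn W = ((Finset.range (W.length + 1) ×ˢ Finset.Icc 1 nn).filter
      (fun q : ℕ × ℕ => SquareFree (insertAt W q.1 q.2))).card := by
  rw [AE, ← Set.ncard_coe_finset]
  congr 1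
  ext ⟨p, x⟩
  simp only [Set.mem_setOf_eq, Finset.coe_filter, Finset.mem_product, Finset.mem_range,
    Finset.mem_Icc, Nat.lt_succ_iff]
  tauto

open Classical in
lemma count_top_left {k : ℕ} (hk : 1 ≤ k) :
    ((Finset.range (2 ^ k)).filter
      (fun p => SquareFree (insertAt (Zimin (k + 1)) p (k + 1)))).card
      = 2 ^ k - (k + 1) := by
  have h1 : 1 ≤ 2 ^ k := Nat.one_le_two_pow
  have hcompl := Finset.card_filter_add_card_filter_not
    (s := Finset.range (2 ^ k))
    (p := fun p => SquareFree (insertAt (Zimin (k + 1)) p (k + 1)))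
  have himg : (Finset.range (2 ^ k)).filter
      (fun p => ¬ SquareFree (insertAt (Zimin (k + 1)) p (k + 1)))
      = (Finset.range (k + 1)).image (fun t => 2 ^ k - 2 ^ t) := by
    ext p
    simp only [Finset.mem_filter, Finset.mem_range, Finset.mem_image]
    unfold SquareFree
    rw [not_not]
    constructor
    · rintro ⟨hp, hsq⟩
      obtain ⟨t, ht⟩ := (insert_top_iff hk (by omega)).mp hsq
      have htk : t ≤ k := pow_le_of_le_pow (by omega)
      exact ⟨t, by omega, by omega⟩
    · rintro ⟨t, htk, rfl⟩
      have h2 : 2 ^ t ≤ 2 ^ k := Nat.pow_le_pow_right (by norm_num) (by omega)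
      have h3 : 1 ≤ 2 ^ t := Nat.one_le_two_pow
      refine ⟨by omega, (insert_top_iff hk (by omega)).mpr ⟨t, by omega⟩⟩
  have hcard : ((Finset.range (k + 1)).image (fun t => 2 ^ k - 2 ^ t)).card = k + 1 := by
    rw [Finset.card_image_of_injOn, Finset.card_range]
    intro t1 h1' t2 h2' he
    simp only [Finset.coe_range, Set.mem_Iio] at h1' h2'
    have e1 : 2 ^ t1 ≤ 2 ^ k := Nat.pow_le_pow_right (by norm_num) (by omega)
    have e2 : 2 ^ t2 ≤ 2 ^ k := Nat.pow_le_pow_right (by norm_num) (by omega)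
    have he' : 2 ^ k - 2 ^ t1 = 2 ^ k - 2 ^ t2 := he
    have : 2 ^ t1 = 2 ^ t2 := by omega
    exact Nat.pow_right_injective (le_refl 2) this
  rw [himg, hcard, Finset.card_range] at hcompl
  omega

open Classical in
lemma count_top_right {k : ℕ} (hk : 1 ≤ k) :
    ((Finset.Ico (2 ^ k) (2 ^ (k + 1))).filter
      (fun p => SquareFree (insertAt (Zimin (k + 1)) p (k + 1)))).card
      = 2 ^ k - (k + 1) := by
  have h1 : 1 ≤ 2 ^ k := Nat.one_le_two_pow
  have h2 : 2 ^ (k + 1) = 2 ^ k + 2 ^ k := by rw [pow_succ]; ring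
  have hlen : (Zimin (k + 1)).length = 2 ^ (k + 1) - 1 := zimin_length _
  have hsymm : ∀ p, p ≤ 2 ^ (k + 1) - 1 →
      (SquareFree (insertAt (Zimin (k + 1)) p (k + 1)) ↔
        SquareFree (insertAt (Zimin (k + 1)) (2 ^ (k + 1) - 1 - p) (k + 1))) := by
    intro p hp
    unfold SquareFree
    rw [hasSquare_insert_symm (zimin_reverse _) (by omega), hlen]
  rw [← count_top_left hk]
  apply Finset.card_bij (i := fun p _ => 2 ^ (k + 1) - 1 - p)
  · intro p hp
    rw [Finset.mem_filter, Finset.mem_Ico] at hp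
    rw [Finset.mem_filter, Finset.mem_range]
    refine ⟨by omega, ?_⟩
    rw [← hsymm p (by omega)]
    exact hp.2
  · intro p hp p' hp' he
    rw [Finset.mem_filter, Finset.mem_Ico] at hp hp'
    omega
  · intro q hq
    rw [Finset.mem_filter, Finset.mem_range] at hq
    refine ⟨2 ^ (k + 1) - 1 - q, ?_, by omega⟩
    rw [Finset.mem_filter, Finset.mem_Ico]
    refine ⟨⟨by omega, by omega⟩, ?_⟩
    rw [hsymm _ (by omega), show 2 ^ (k + 1) - 1 - (2 ^ (k + 1) - 1 - q) = q from by omega]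
    exact hq.2

open Classical in
lemma count_top {k : ℕ} (hk : 1 ≤ k) :
    ((Finset.range (2 ^ (k + 1))).filter
      (fun p => SquareFree (insertAt (Zimin (k + 1)) p (k + 1)))).card
      = 2 ^ (k + 1) - 2 * (k + 1) := by
  have h1 : 1 ≤ 2 ^ k := Nat.one_le_two_pow
  have h2 : 2 ^ (k + 1) = 2 ^ k + 2 ^ k := by rw [pow_succ]; ring
  have hkk : k < 2 ^ k := Nat.lt_two_pow_self
  rw [Finset.range_eq_Ico,
    ← Finset.Ico_union_Ico_eq_Ico (Nat.zero_le (2 ^ k)) (by omega),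
    Finset.filter_union,
    Finset.card_union_of_disjoint
      (Finset.disjoint_filter_filter (Finset.Ico_disjoint_Ico_consecutive _ _ _)),
    ← Finset.range_eq_Ico, count_top_left hk, count_top_right hk]
  omega

open Classical in
lemma count_low {k : ℕ} (hk : 1 ≤ k) :
    ((Finset.range (2 ^ (k + 1)) ×ˢ Finset.Icc 1 k).filter
      (fun q : ℕ × ℕ => SquareFree (insertAt (Zimin (k + 1)) q.1 q.2))).card
      = 2 * ((Finset.range (2 ^ k) ×ˢ Finset.Icc 1 k).filter
        (fun q : ℕ × ℕ => SquareFree (insertAt (Zimin k) q.1 q.2))).card := by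
  have h1 : 1 ≤ 2 ^ k := Nat.one_le_two_pow
  have h2 : 2 ^ (k + 1) = 2 ^ k + 2 ^ k := by rw [pow_succ]; ring
  rw [Finset.range_eq_Ico,
    ← Finset.Ico_union_Ico_eq_Ico (Nat.zero_le (2 ^ k)) (by omega),
    Finset.union_product, Finset.filter_union,
    Finset.card_union_of_disjoint (Finset.disjoint_filter_filter (by
      rw [Finset.disjoint_left]
      rintro ⟨p, x⟩ hmem hmem'
      rw [Finset.mem_product, Finset.mem_Ico] at hmem hmem'
      omega))]
  have hleft : ((Finset.Ico 0 (2 ^ k) ×ˢ Finset.Icc 1 k).filter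
      (fun q : ℕ × ℕ => SquareFree (insertAt (Zimin (k + 1)) q.1 q.2))).card
      = ((Finset.range (2 ^ k) ×ˢ Finset.Icc 1 k).filter
        (fun q : ℕ × ℕ => SquareFree (insertAt (Zimin k) q.1 q.2))).card := by
    rw [← Finset.range_eq_Ico]
    congr 1
    apply Finset.filter_congr
    rintro ⟨p, x⟩ hmem
    rw [Finset.mem_product, Finset.mem_range, Finset.mem_Icc] at hmem
    exact insert_low_iff_left (by omega) (by omega)
  have hright : ((Finset.Ico (2 ^ k) (2 ^ (k + 1)) ×ˢ Finset.Icc 1 k).filter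
      (fun q : ℕ × ℕ => SquareFree (insertAt (Zimin (k + 1)) q.1 q.2))).card
      = ((Finset.range (2 ^ k) ×ˢ Finset.Icc 1 k).filter
        (fun q : ℕ × ℕ => SquareFree (insertAt (Zimin k) q.1 q.2))).card := by
    apply Finset.card_bij (i := fun q _ => (q.1 - 2 ^ k, q.2))
    · rintro ⟨p, x⟩ hmem
      rw [Finset.mem_filter, Finset.mem_product, Finset.mem_Ico, Finset.mem_Icc] at hmem
      rw [Finset.mem_filter, Finset.mem_product, Finset.mem_range, Finset.mem_Icc]
      obtain ⟨⟨⟨hp1, hp2⟩, hx⟩, hsf⟩ := hmem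
      refine ⟨⟨by omega, hx⟩, ?_⟩
      exact (insert_low_iff_right (by omega) hp1).mp hsf
    · rintro ⟨p, x⟩ hmem ⟨p', x'⟩ hmem' he
      rw [Finset.mem_filter, Finset.mem_product, Finset.mem_Ico] at hmem hmem'
      simp only [Prod.mk.injEq] at he ⊢
      omega
    · rintro ⟨p, x⟩ hmem
      rw [Finset.mem_filter, Finset.mem_product, Finset.mem_range, Finset.mem_Icc] at hmem
      obtain ⟨⟨hp, hx⟩, hsf⟩ := hmem
      refine ⟨(p + 2 ^ k, x), ?_, by
        show (p + 2 ^ k - 2 ^ k, x) = (p, x)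
        rw [show p + 2 ^ k - 2 ^ k = p from by omega]⟩
      rw [Finset.mem_filter, Finset.mem_product, Finset.mem_Ico, Finset.mem_Icc]
      refine ⟨⟨⟨by omega, by omega⟩, hx⟩, ?_⟩
      rw [insert_low_iff_right (by omega) (by omega),
        show p + 2 ^ k - 2 ^ k = p from by omega]
      exact hsf
  rw [hleft, hright, Finset.range_eq_Ico]
  ring

open Classical in
theorem AE_zimin_recursion (n : ℕ) (hn : 4 ≤ n) :
    AE n (Zimin n) = 2 ^ n - 2 * n + 2 * AE (n - 1) (Zimin (n - 1)) := by
  obtain ⟨k, rfl⟩ : ∃ k, n = k + 1 := ⟨n - 1, by omega⟩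
  have hk : 1 ≤ k := by omega
  have h1 : 1 ≤ 2 ^ k := Nat.one_le_two_pow
  have h1' : 1 ≤ 2 ^ (k + 1) := Nat.one_le_two_pow
  have h2 : 2 ^ (k + 1) = 2 ^ k + 2 ^ k := by rw [pow_succ]; ring
  have hkk : k < 2 ^ k := Nat.lt_two_pow_self
  rw [show k + 1 - 1 = k from rfl, AE_eq_card, AE_eq_card, zimin_length, zimin_length,
    show 2 ^ (k + 1) - 1 + 1 = 2 ^ (k + 1) from by omega,
    show 2 ^ k - 1 + 1 = 2 ^ k from by omega]
  set F := (Finset.range (2 ^ (k + 1)) ×ˢ Finset.Icc 1 (k + 1)).filter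
    (fun q : ℕ × ℕ => SquareFree (insertAt (Zimin (k + 1)) q.1 q.2)) with hF
  have hsplit := Finset.card_filter_add_card_filter_not
    (s := F) (p := fun q : ℕ × ℕ => q.2 = k + 1)
  have htop : (F.filter (fun q : ℕ × ℕ => q.2 = k + 1)).card
      = 2 ^ (k + 1) - 2 * (k + 1) := by
    rw [← count_top hk]
    apply Finset.card_bij (i := fun q _ => q.1)
    · rintro ⟨p, x⟩ hmem
      rw [Finset.mem_filter, hF, Finset.mem_filter, Finset.mem_product,
        Finset.mem_range] at hmem
      rw [Finset.mem_filter, Finset.mem_range]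
      obtain ⟨⟨⟨hp, _⟩, hsf⟩, hx⟩ := hmem
      simp only at hx
      subst hx
      exact ⟨hp, hsf⟩
    · rintro ⟨p, x⟩ hmem ⟨p', x'⟩ hmem' he
      rw [Finset.mem_filter] at hmem hmem'
      simp only at he hmem hmem'
      simp only [Prod.mk.injEq]
      exact ⟨he, by omega⟩
    · intro p hp
      rw [Finset.mem_filter, Finset.mem_range] at hp
      refine ⟨(p, k + 1), ?_, rfl⟩
      rw [Finset.mem_filter, hF, Finset.mem_filter, Finset.mem_product,
        Finset.mem_range, Finset.mem_Icc]
      exact ⟨⟨⟨hp.1, by omega⟩, hp.2⟩, rfl⟩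
  have hlow : F.filter (fun q : ℕ × ℕ => ¬ q.2 = k + 1)
      = (Finset.range (2 ^ (k + 1)) ×ˢ Finset.Icc 1 k).filter
        (fun q : ℕ × ℕ => SquareFree (insertAt (Zimin (k + 1)) q.1 q.2)) := by
    ext ⟨p, x⟩
    rw [Finset.mem_filter, hF, Finset.mem_filter, Finset.mem_product, Finset.mem_range,
      Finset.mem_Icc, Finset.mem_filter, Finset.mem_product, Finset.mem_range,
      Finset.mem_Icc]
    constructor
    · rintro ⟨⟨⟨hp, hx⟩, hsf⟩, hne⟩
      simp only at hne
      exact ⟨⟨hp, by omega⟩, hsf⟩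
    · rintro ⟨⟨hp, hx⟩, hsf⟩
      exact ⟨⟨⟨hp, by omega⟩, hsf⟩, by simp; omega⟩
  rw [htop, hlow, count_low hk] at hsplit
  omega
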